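/- Let 𝔽 be a field and σ_1, …, σ_k ∈ 𝔽. Define the Newton polynomials n_0(λ) := 1 and n_j(λ) := ∏_{i=1}^{j} (λ − σ_i) for j = 1,…,k, and let π(λ) := (n_k(λ), n_{k−1}(λ), …, n_0(λ))ᵀ. Define the k×(k+1) matrix pencil L(λ) with entries 1 in position (r,r) and σ_{k+1−r} − λ in position (r,r+1), and zeros elsewhere. Then L(λ)·π(λ) = 0 identically, L(λ₀) has rank k for every λ₀ ∈ 𝔽, and the k×(k+1) matrix formed by the coefficients of λ in the entries of L(λ) has rank k (so L(λ) is a dual minimal basis for the Newton basis on the nodes σ_1,…,σ_k). -/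

import Mathlib

open Polynomial Matrix

namespace PaperLin

variable {F : Type*} [Field F]

lemma rank_eq_of_submatrix {k : ℕ} (A : Matrix (Fin k) (Fin (k + 1)) F)
    (g : Fin k → Fin (k + 1)) (h : IsUnit (A.submatrix id g).det) :
    A.rank = k := by
  refine le_antisymm (A.rank_le_card_height.trans (by simp)) ?_
  have h1 : A.submatrix id g
      = A * (1 : Matrix (Fin (k + 1)) (Fin (k + 1)) F).submatrix (Equiv.refl _) g := by
    rw [Matrix.mul_submatrix_one]; rfl
  have h2 := Matrix.rank_mul_le_left A
    ((1 : Matrix (Fin (k + 1)) (Fin (k + 1)) F).submatrix (Equiv.refl _) g)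
  rw [← h1] at h2
  have h3 : (A.submatrix id g).rank = k := by
    rw [Matrix.rank_of_isUnit _ ((Matrix.isUnit_iff_isUnit_det _).mpr h)]
    simp
  omega

/-- The explicit bidiagonal pencil is a dual minimal basis for the Newton
basis on the nodes `σ_1, …, σ_k`. -/
theorem statement5 (k : ℕ) (σ : Fin k → F) :
    let n : Fin (k + 1) → Polynomial F := fun j =>
      ∏ i ∈ Finset.univ.filter (fun i : Fin k => (i : ℕ) < (j : ℕ)),
        (Polynomial.X - Polynomial.C (σ i))
    let π : Fin (k + 1) → Polynomial F := fun i => n i.rev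
    let L : Matrix (Fin k) (Fin (k + 1)) (Polynomial F) :=
      Matrix.of fun r c =>
        if c = r.castSucc then 1
        else if c = r.succ then Polynomial.C (σ r.rev) - Polynomial.X
        else 0
    L.mulVec π = 0 ∧
    (∀ x : F, (L.map (Polynomial.eval x)).rank = k) ∧
    (Matrix.of fun (r : Fin k) (c : Fin (k + 1)) => (L r c).coeff 1).rank = k := by
  intro n π L
  have hsucc : ∀ j : Fin k, n j.succ = n j.castSucc * (X - C (σ j)) := by
    intro j
    have hset : Finset.univ.filter (fun i : Fin k => (i : ℕ) < ((j.succ : Fin (k+1)) : ℕ))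
        = insert j (Finset.univ.filter fun i : Fin k => (i : ℕ) < ((j.castSucc : Fin (k+1)) : ℕ)) := by
      ext i
      simp only [Finset.mem_filter, Finset.mem_univ, true_and, Finset.mem_insert,
        Fin.val_succ, Fin.coe_castSucc, Nat.lt_succ_iff_lt_or_eq, Fin.ext_iff]
      tauto
    have hj : j ∉ Finset.univ.filter fun i : Fin k => (i : ℕ) < ((j.castSucc : Fin (k+1)) : ℕ) := by
      simp
    show (∏ i ∈ _, _) = (∏ i ∈ _, _) * _
    rw [hset, Finset.prod_insert hj, mul_comm]
  refine ⟨?_, ?_, ?_⟩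
  · funext r
    have hne : r.castSucc ≠ r.succ := (Fin.castSucc_lt_succ : r.castSucc < r.succ).ne
    have : L.mulVec π r = π r.castSucc + (C (σ r.rev) - X) * π r.succ := by
      unfold Matrix.mulVec dotProduct
      have : ∀ c : Fin (k + 1), L r c * π c
          = (if c = r.castSucc then π c else 0) + (if c = r.succ then (C (σ r.rev) - X) * π c else 0) := by
        intro c
        by_cases h1 : c = r.castSucc <;> by_cases h2 : c = r.succ <;>
          simp_all [L, Matrix.of_apply]
      simp only [this, Finset.sum_add_distrib, Finset.sum_ite_eq', Finset.mem_univ, if_true]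
    rw [this]
    show π r.castSucc + (C (σ r.rev) - X) * π r.succ = 0
    have h1 : π r.castSucc = n (r.rev).succ := by
      simp [π, Fin.rev_castSucc]
    have h2 : π r.succ = n (r.rev).castSucc := by
      simp [π, Fin.rev_succ]
    rw [h1, h2, hsucc r.rev]
    ring
  · intro x
    apply rank_eq_of_submatrix _ Fin.castSucc
    have htri : ((L.map (eval x)).submatrix id Fin.castSucc).BlockTriangular id := by
      intro i j hij
      simp only [Matrix.submatrix_apply, Matrix.map_apply, id] at hij ⊢
      have h1 : j.castSucc ≠ i.castSucc := by
        simp only [ne_eq, Fin.castSucc_inj]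
        exact fun h => absurd h (by rintro rfl; exact lt_irrefl _ hij)
      have h2 : j.castSucc ≠ i.succ := by
        intro h
        have := Fin.val_eq_of_eq h
        simp only [Fin.coe_castSucc, Fin.val_succ] at this
        omega
      simp [L, h1, h2]
    rw [Matrix.det_of_upperTriangular htri]
    have hd : ∀ i : Fin k, ((L.map (eval x)).submatrix id Fin.castSucc) i i = 1 := by
      intro i
      simp [L, Matrix.submatrix_apply, Matrix.map_apply]
    have : (∏ i : Fin k, (L.map (eval x)).submatrix id Fin.castSucc i i) = 1 := by
      rw [Finset.prod_congr rfl fun i _ => hd i]; simp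
    rw [this]
    exact isUnit_one
  · apply rank_eq_of_submatrix _ Fin.succ
    have heq : (Matrix.of fun (r : Fin k) (c : Fin (k + 1)) => (L r c).coeff 1).submatrix id Fin.succ
        = -(1 : Matrix (Fin k) (Fin k) F) := by
      ext i j
      simp only [Matrix.submatrix_apply, Matrix.of_apply, id, Matrix.neg_apply,
        Matrix.one_apply, L]
      by_cases h : j = i
      · subst h
        rw [if_neg (Fin.castSucc_lt_succ : j.castSucc < j.succ).ne', if_pos rfl]
        simp [coeff_one, coeff_X]
      · have hij : ¬ i = j := fun hh => h hh.symm
        by_cases h3 : j.succ = i.castSucc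
        · rw [if_pos h3]
          simp [coeff_one, hij]
        · rw [if_neg h3, if_neg (by simpa [Fin.succ_inj] using h)]
          simp [hij]
    rw [heq]
    simp [Matrix.det_neg]

end PaperLin
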